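/- Let n ≥ 1 and p > n. There exists a constant C > 0, depending only on n and p, such that the following holds. Let u : ℝ^n → ℝ be any function and let g : ℝ^n → [0,∞] be a Borel function with ∫_{ℝ^n} g^p dx < ∞ which is an upper gradient of u, that is, |u(c(L)) − u(c(0))| ≤ ∫_0^L g(c(t)) dt for every L > 0 and every curve c : [0,L] → ℝ^n parametrized by arc length. Then for all x, y ∈ ℝ^n with |x − y| ≤ 1 one has |u(x) − u(y)| ≤ C·|x − y|^{1 − n/p}·‖g‖_{L^p(B(x, C|x−y|))}. -/

import Mathlib

open MeasureTheory Set Metric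
open scoped ENNReal

/-- A curve `c : [0,L] → X` parametrized by arc length: `c` is 1-Lipschitz on `[0,L]`
and its length (total variation) on each subinterval `[s,t] ⊆ [0,L]` equals `t - s`. -/
def IsArcLengthParam {X : Type*} [PseudoMetricSpace X] (L : ℝ) (c : ℝ → X) : Prop :=
  LipschitzOnWith 1 c (Icc 0 L) ∧
    ∀ s t : ℝ, 0 ≤ s → s ≤ t → t ≤ L →
      eVariationOn c (Icc s t) = ENNReal.ofReal (t - s)

/-- `g` is an upper gradient of `u`: for every curve `c : [0,L] → X` parametrized by
arc length, `|u(c(L)) - u(c(0))| ≤ ∫_0^L g(c(t)) dt`. -/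
def IsUpperGradient {X : Type*} [PseudoMetricSpace X] (u : X → ℝ) (g : X → ℝ≥0∞) :
    Prop :=
  ∀ L : ℝ, 0 < L → ∀ c : ℝ → X, IsArcLengthParam L c →
    ENNReal.ofReal |u (c L) - u (c 0)| ≤ ∫⁻ t in Icc 0 L, g (c t) ∂volume


section Aux

lemma evar_isom {E : Type*} [NormedAddCommGroup E] {c : ℝ → E} {a b : ℝ} (hab : a ≤ b)
    (h : ∀ s ∈ Icc a b, ∀ t ∈ Icc a b, dist (c s) (c t) = |s - t|) :
    eVariationOn c (Icc a b) = ENNReal.ofReal (b - a) := by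
  apply le_antisymm
  · apply iSup_le
    rintro ⟨m, ⟨v, hv, vs⟩⟩
    have key : ∀ i ∈ Finset.range m,
        edist (c (v (i + 1))) (c (v i)) = ENNReal.ofReal (v (i+1) - v i) := by
      intro i _
      rw [edist_dist, h _ (vs _) _ (vs _), abs_of_nonneg (sub_nonneg.2 (hv (Nat.le_succ i)))]
    calc ∑ i ∈ Finset.range m, edist (c (v (i + 1))) (c (v i))
        = ∑ i ∈ Finset.range m, ENNReal.ofReal (v (i+1) - v i) := Finset.sum_congr rfl key
      _ = ENNReal.ofReal (∑ i ∈ Finset.range m, (v (i+1) - v i)) := by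
          rw [ENNReal.ofReal_sum_of_nonneg]
          intro i _
          exact sub_nonneg.2 (hv (Nat.le_succ i))
      _ = ENNReal.ofReal (v m - v 0) := by rw [Finset.sum_range_sub]
      _ ≤ ENNReal.ofReal (b - a) := by
          apply ENNReal.ofReal_le_ofReal
          have h1 := (vs m).2
          have h2 := (vs 0).1
          linarith
  · have := eVariationOn.edist_le c (Set.mem_Icc.2 ⟨le_rfl, hab⟩) (Set.mem_Icc.2 ⟨hab, le_rfl⟩)
    rw [edist_dist, h a ⟨le_rfl, hab⟩ b ⟨hab, le_rfl⟩, abs_of_nonpos (by linarith), neg_sub]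
      at this
    exact this

lemma lint_scale {h : ℝ → ℝ≥0∞} (hh : Measurable h) {a : ℝ} (ha : 0 < a) :
    ∫⁻ t in Icc 0 a, h t = ENNReal.ofReal a * ∫⁻ s in Icc (0:ℝ) 1, h (a * s) := by
  have hmap : Measure.map (a • ·) (volume : Measure ℝ)
      = ENNReal.ofReal |(a ^ Module.finrank ℝ ℝ)⁻¹| • volume :=
    Measure.map_addHaar_smul volume ha.ne'
  rw [Module.finrank_self, pow_one, abs_of_pos (inv_pos.2 ha)] at hmap
  have hpre : ((a • ·) : ℝ → ℝ) ⁻¹' (Icc 0 a) = Icc 0 1 := by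
    ext s
    simp only [mem_preimage, mem_Icc, smul_eq_mul]
    constructor
    · rintro ⟨h1, h2⟩
      exact ⟨nonneg_of_mul_nonneg_right h1 ha, by nlinarith⟩
    · rintro ⟨h1, h2⟩
      exact ⟨mul_nonneg ha.le h1, by nlinarith⟩
  have hsm : Measurable ((a • ·) : ℝ → ℝ) := measurable_id.const_smul a
  have key := setLIntegral_map (μ := (volume : Measure ℝ)) (s := Icc (0:ℝ) a)
    measurableSet_Icc hh hsm
  rw [hmap, hpre, Measure.restrict_smul, lintegral_smul_measure] at key
  have : ENNReal.ofReal a * (ENNReal.ofReal a⁻¹ * ∫⁻ t in Icc 0 a, h t)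
      = ∫⁻ t in Icc 0 a, h t := by
    rw [← mul_assoc, ← ENNReal.ofReal_mul ha.le, mul_inv_cancel₀ ha.ne', ENNReal.ofReal_one,
      one_mul]
  rw [smul_eq_mul] at key
  rw [← this, key]
  simp [smul_eq_mul]

section Curve

variable {E : Type*} [NormedAddCommGroup E] [NormedSpace ℝ E] [MeasurableSpace E] [BorelSpace E]
  {u : E → ℝ} {g : E → ℝ≥0∞}

lemma key_seg (hg : Measurable g) (hug : IsUpperGradient u g) (a b : E) (hab : a ≠ b) :
    ENNReal.ofReal |u b - u a| ≤
      ENNReal.ofReal (dist a b) * ∫⁻ s in Icc (0:ℝ) 1, g (a + s • (b - a)) := by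
  set L : ℝ := ‖b - a‖ with hLdef
  have hL : 0 < L := by simpa [hLdef, sub_ne_zero] using hab.symm
  set c : ℝ → E := fun t => a + (t / L) • (b - a) with hc
  have hdist : ∀ s t : ℝ, dist (c s) (c t) = |s - t| := by
    intro s t
    rw [dist_eq_norm]
    have : c s - c t = ((s - t) / L) • (b - a) := by
      simp only [hc, sub_div]
      rw [sub_smul]
      abel
    rw [this, norm_smul, ← hLdef, Real.norm_eq_abs, abs_div, abs_of_pos hL,
      div_mul_cancel₀ _ hL.ne']
  have halp : IsArcLengthParam L c := by
    constructor
    · apply LipschitzOnWith.of_dist_le_mul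
      intro s _ t _
      rw [hdist, NNReal.coe_one, one_mul, Real.dist_eq]
    · intro s t hs hst htL
      exact evar_isom hst (fun s' _ t' _ => hdist s' t')
  have h0 : c 0 = a := by simp [hc]
  have hLv : c L = b := by
    simp [hc, div_self hL.ne']
  have := hug L hL c halp
  rw [h0, hLv] at this
  refine this.trans (le_of_eq ?_)
  have hmeas : Measurable fun t : ℝ => g (a + (t / L) • (b - a)) :=
    hg.comp (continuous_const.add ((continuous_id.div_const L).smul continuous_const)).measurable
  calc ∫⁻ t in Icc 0 L, g (c t) = ∫⁻ t in Icc 0 L, g (a + (t / L) • (b - a)) := rfl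
    _ = ENNReal.ofReal L * ∫⁻ s in Icc (0:ℝ) 1, g (a + ((L * s) / L) • (b - a)) :=
        lint_scale hmeas hL
    _ = ENNReal.ofReal (dist a b) * ∫⁻ s in Icc (0:ℝ) 1, g (a + s • (b - a)) := by
        rw [dist_eq_norm, norm_sub_rev, ← hLdef]
        congr 1
        apply lintegral_congr
        intro s
        congr 2
        field_simp

lemma key_two (hg : Measurable g) (hug : IsUpperGradient u g) (a m b : E)
    (ham : a ≠ m) (hmb : m ≠ b) :
    ENNReal.ofReal |u b - u a| ≤
      ENNReal.ofReal (dist a m) * (∫⁻ s in Icc (0:ℝ) 1, g (a + s • (m - a))) +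
      ENNReal.ofReal (dist m b) * ∫⁻ s in Icc (0:ℝ) 1, g (m + s • (b - m)) := by
  set L1 : ℝ := ‖m - a‖ with hL1def
  set L2 : ℝ := ‖b - m‖ with hL2def
  have hL1 : 0 < L1 := by simpa [hL1def, sub_ne_zero] using ham.symm
  have hL2 : 0 < L2 := by simpa [hL2def, sub_ne_zero] using hmb.symm
  set L : ℝ := L1 + L2 with hLdef
  have hL : 0 < L := by positivity
  set c : ℝ → E := fun t =>
    if t ≤ L1 then a + (t / L1) • (m - a) else m + ((t - L1) / L2) • (b - m) with hc
  have hc1 : ∀ t : ℝ, t ≤ L1 → c t = a + (t / L1) • (m - a) := fun t ht => if_pos ht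
  have hc2 : ∀ t : ℝ, L1 ≤ t → c t = m + ((t - L1) / L2) • (b - m) := by
    intro t ht
    rcases eq_or_lt_of_le ht with h | h
    · rw [← h, hc1 L1 le_rfl, div_self hL1.ne', one_smul]
      simp
    · exact if_neg (not_le.2 h)
  have h0 : c 0 = a := by rw [hc1 0 hL1.le]; simp
  have hm : c L1 = m := by rw [hc1 L1 le_rfl, div_self hL1.ne', one_smul]; abel
  have hLv : c L = b := by
    rw [hc2 L (by simp [hLdef, hL2.le])]
    simp only [hLdef, add_sub_cancel_left]
    rw [div_self hL2.ne', one_smul]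
    abel
  have d1 : ∀ s t : ℝ, s ≤ L1 → t ≤ L1 → dist (c s) (c t) = |s - t| := by
    intro s t hs ht
    rw [hc1 s hs, hc1 t ht, dist_eq_norm]
    have : a + (s / L1) • (m - a) - (a + (t / L1) • (m - a)) = ((s - t) / L1) • (m - a) := by
      rw [sub_div, sub_smul]
      abel
    rw [this, norm_smul, ← hL1def, Real.norm_eq_abs, abs_div, abs_of_pos hL1,
      div_mul_cancel₀ _ hL1.ne']
  have d2 : ∀ s t : ℝ, L1 ≤ s → L1 ≤ t → dist (c s) (c t) = |s - t| := by
    intro s t hs ht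
    rw [hc2 s hs, hc2 t ht, dist_eq_norm]
    have : m + ((s - L1) / L2) • (b - m) - (m + ((t - L1) / L2) • (b - m))
        = ((s - t) / L2) • (b - m) := by
      module
    rw [this, norm_smul, ← hL2def, Real.norm_eq_abs, abs_div, abs_of_pos hL2,
      div_mul_cancel₀ _ hL2.ne']
  have dlip : ∀ s t : ℝ, s ≤ t → dist (c s) (c t) ≤ t - s := by
    intro s t hst
    rcases le_or_gt t L1 with h | h
    · rw [d1 s t (hst.trans h) h, abs_of_nonpos (by linarith)]; linarith
    rcases le_or_gt L1 s with h' | h'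
    · rw [d2 s t h' (h.le), abs_of_nonpos (by linarith)]; linarith
    · calc dist (c s) (c t) ≤ dist (c s) (c L1) + dist (c L1) (c t) := dist_triangle _ _ _
        _ ≤ (L1 - s) + (t - L1) := by
            rw [d1 s L1 h'.le le_rfl, d2 L1 t le_rfl h.le,
              abs_of_nonpos (by linarith), abs_of_nonpos (by linarith)]
            linarith
        _ = t - s := by ring
  have halp : IsArcLengthParam L c := by
    constructor
    · apply LipschitzOnWith.of_dist_le_mul
      intro s _ t _
      rw [NNReal.coe_one, one_mul, Real.dist_eq]
      rcases le_total s t with h | h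
      · exact (dlip s t h).trans (by rw [abs_sub_comm]; exact le_abs_self _)
      · rw [dist_comm]
        exact (dlip t s h).trans (le_abs_self _)
    · intro s t hs hst htL
      rcases le_or_gt t L1 with h | h
      · exact evar_isom hst (fun s' hs' t' ht' => d1 s' t' (hs'.2.trans h) (ht'.2.trans h))
      rcases le_or_gt L1 s with h' | h'
      · exact evar_isom hst (fun s' hs' t' ht' => d2 s' t' (h'.trans hs'.1) (h'.trans ht'.1))
      · have hsL1 : s ≤ L1 := h'.le
        have hL1t : L1 ≤ t := h.le
        have key := eVariationOn.Icc_add_Icc c (s := Icc s t) hsL1 hL1t ⟨hsL1, hL1t⟩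
        have e1 : Icc s t ∩ Icc s L1 = Icc s L1 := by
          rw [Icc_inter_Icc]
          simp [max_self, min_eq_right hL1t]
        have e2 : Icc s t ∩ Icc L1 t = Icc L1 t := by
          rw [Icc_inter_Icc]
          simp [min_self, max_eq_right hsL1]
        have e3 : Icc s t ∩ Icc s t = Icc s t := inter_self _
        rw [e1, e2, e3] at key
        rw [← key,
          evar_isom hsL1 (fun s' hs' t' ht' => d1 s' t' hs'.2 ht'.2),
          evar_isom hL1t (fun s' hs' t' ht' => d2 s' t' hs'.1 ht'.1),
          ← ENNReal.ofReal_add (by linarith) (by linarith)]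
        ring_nf
  have hub := hug L hL c halp
  rw [h0, hLv] at hub
  refine hub.trans ?_
  have hmeas1 : Measurable fun t : ℝ => g (a + (t / L1) • (m - a)) :=
    hg.comp (continuous_const.add ((continuous_id.div_const L1).smul continuous_const)).measurable
  have hmeas2 : Measurable fun t : ℝ => g (m + (t / L2) • (b - m)) :=
    hg.comp (continuous_const.add ((continuous_id.div_const L2).smul continuous_const)).measurable
  have hsplit : ∫⁻ t in Icc 0 L, g (c t)
      = (∫⁻ t in Icc 0 L1, g (c t)) + ∫⁻ t in Ioc L1 L, g (c t) := by
    rw [← lintegral_union measurableSet_Ioc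
        (Set.disjoint_left.mpr fun t h1 h2 => absurd h2.1 (not_lt.2 h1.2)),
      Icc_union_Ioc_eq_Icc hL1.le (by simp [hLdef, hL2.le])]
  have hp1 : ∫⁻ t in Icc 0 L1, g (c t)
      = ENNReal.ofReal (dist a m) * ∫⁻ s in Icc (0:ℝ) 1, g (a + s • (m - a)) := by
    rw [setLIntegral_congr_fun measurableSet_Icc
      (fun t (ht : t ∈ Icc 0 L1) => by rw [hc1 t ht.2]),
      lint_scale hmeas1 hL1, dist_eq_norm, norm_sub_rev, ← hL1def]
    congr 1
    apply lintegral_congr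
    intro s
    congr 2
    field_simp
  have hp2 : ∫⁻ t in Ioc L1 L, g (c t)
      = ENNReal.ofReal (dist m b) * ∫⁻ s in Icc (0:ℝ) 1, g (m + s • (b - m)) := by
    rw [setLIntegral_congr Ioc_ae_eq_Icc,
      setLIntegral_congr_fun measurableSet_Icc
        (fun t (ht : t ∈ Icc L1 L) => by rw [hc2 t ht.1])]
    have hmp : MeasurePreserving (· + L1) (volume : Measure ℝ) volume :=
      measurePreserving_add_right volume L1
    have hpre : ((· + L1) : ℝ → ℝ) ⁻¹' (Icc L1 L) = Icc 0 L2 := by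
      ext t
      simp only [mem_preimage, mem_Icc, hLdef]
      constructor <;> rintro ⟨u1, u2⟩ <;> constructor <;> linarith
    have hcomp := hmp.setLIntegral_comp_preimage (s := Icc L1 L) measurableSet_Icc
      (f := fun t => g (m + ((t - L1) / L2) • (b - m)))
      (hg.comp (continuous_const.add (((continuous_id.sub continuous_const).div_const L2).smul
        continuous_const)).measurable)
    rw [hpre] at hcomp
    rw [← hcomp]
    have : ∀ t : ℝ, g (m + ((t + L1 - L1) / L2) • (b - m)) = g (m + (t / L2) • (b - m)) := by
      intro t
      congr 2
      ring_nf
    rw [lintegral_congr fun t => this t, lint_scale hmeas2 hL2, dist_eq_norm, norm_sub_rev,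
      ← hL2def]
    congr 1
    apply lintegral_congr
    intro s
    congr 2
    field_simp
  rw [hsplit, hp1, hp2]

end Curve


section Haar
variable {E : Type*} [NormedAddCommGroup E] [NormedSpace ℝ E] [MeasurableSpace E] [BorelSpace E]
  [FiniteDimensional ℝ E] (μ : Measure E) [μ.IsAddHaarMeasure]

lemma reflect_lint {g : E → ℝ≥0∞} (hg : Measurable g) (a b : E) :
    ∫⁻ s in Icc (0:ℝ) 1, g (a + s • (b - a)) = ∫⁻ s in Icc (0:ℝ) 1, g (b + s • (a - b)) := by
  have h1 : MeasurePreserving (fun s : ℝ => -s) (volume : Measure ℝ) volume :=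
    Measure.measurePreserving_neg volume
  have h2 : MeasurePreserving (fun s : ℝ => 1 + s) (volume : Measure ℝ) volume :=
    measurePreserving_add_left volume 1
  have hmp : MeasurePreserving (fun s : ℝ => 1 - s) volume volume := by
    simpa [Function.comp_def, sub_eq_add_neg] using h2.comp h1
  have hpre : (fun s : ℝ => 1 - s) ⁻¹' (Icc 0 1) = Icc 0 1 := by
    ext s; simp only [mem_preimage, mem_Icc]; constructor <;> rintro ⟨u1, u2⟩ <;>
      constructor <;> linarith
  have hmeas : Measurable fun t : ℝ => g (a + t • (b - a)) :=
    hg.comp ((measurable_id.smul_const (b - a)).const_add a)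
  have := hmp.setLIntegral_comp_preimage (s := Icc (0:ℝ) 1) measurableSet_Icc hmeas
  rw [hpre] at this
  rw [← this]
  apply lintegral_congr
  intro s
  congr 1
  have : a + (1 - s) • (b - a) = b + s • (a - b) := by
    simp [sub_smul, smul_sub, one_smul]
    abel
  rw [this]

lemma scale_lint_E {g : E → ℝ≥0∞} (hg : Measurable g) {s : ℝ} (hs : 0 < s) (w : E)
    {S : Set E} (hS : MeasurableSet S) :
    ∫⁻ z in (fun z => w + s • (z - w)) ⁻¹' S, g (w + s • (z - w)) ∂μ
      = ENNReal.ofReal ((s ^ Module.finrank ℝ E)⁻¹) * ∫⁻ v in S, g v ∂μ := by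
  set φ : E → E := fun z => w + s • (z - w) with hφ
  have hcomp : φ = (fun v => (w - s • w) + v) ∘ (s • ·) := by
    funext z
    simp only [φ, Function.comp, smul_sub]
    abel
  have hφm : Measurable φ := by
    apply Continuous.measurable
    exact (continuous_const.add ((continuous_id.sub continuous_const).const_smul s))
  have hmap : Measure.map φ μ = ENNReal.ofReal ((s ^ Module.finrank ℝ E)⁻¹) • μ := by
    rw [hcomp, ← Measure.map_map (measurable_const_add _) (measurable_const_smul s),
      Measure.map_addHaar_smul μ hs.ne', Measure.map_smul,
      (measurePreserving_add_left μ (w - s • w)).map_eq,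
      abs_of_pos (inv_pos.2 (pow_pos hs _))]
  have key := setLIntegral_map (μ := μ) (s := S) hS hg hφm
  rw [hmap, Measure.restrict_smul, lintegral_smul_measure] at key
  rw [← key, smul_eq_mul]

end Haar
end Aux
set_option maxHeartbeats 2000000 in
theorem stmt8 (n : ℕ) (hn : 1 ≤ n) (p : ℝ) (hp : (n : ℝ) < p) :
    ∃ C : ℝ, 0 < C ∧
      ∀ (u : EuclideanSpace ℝ (Fin n) → ℝ) (g : EuclideanSpace ℝ (Fin n) → ℝ≥0∞),
        Measurable g → (∫⁻ z, g z ^ p) < ⊤ → IsUpperGradient u g →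
        ∀ x y : EuclideanSpace ℝ (Fin n), dist x y ≤ 1 →
          ENNReal.ofReal |u x - u y| ≤
            ENNReal.ofReal (C * dist x y ^ (1 - n / p)) *
              (∫⁻ z in closedBall x (C * dist x y), g z ^ p) ^ (1 / p) := by
  classical
  have hp1 : (1:ℝ) < p := lt_of_le_of_lt (by exact_mod_cast hn) hp
  have hp0 : (0:ℝ) < p := lt_trans one_pos hp1
  set q := Real.conjExponent p with hqdef
  have hq : p.HolderConjugate q := Real.HolderConjugate.conjExponent hp1
  have hq0 : 0 < q := hq.symm.pos
  have h1q : 1/q = 1 - 1/p := by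
    have := hq.inv_add_inv_eq_one
    rw [one_div, one_div]; linarith
  have hvbne : volume (closedBall (0 : EuclideanSpace ℝ (Fin n)) 1) ≠ ⊤ :=
    measure_closedBall_lt_top.ne
  set vb := (volume (closedBall (0 : EuclideanSpace ℝ (Fin n)) 1)).toReal with hvbdef
  have hvb : 0 < vb :=
    ENNReal.toReal_pos (measure_closedBall_pos volume _ one_pos).ne' hvbne
  have hvbeq : volume (closedBall (0 : EuclideanSpace ℝ (Fin n)) 1) = ENNReal.ofReal vb :=
    (ENNReal.ofReal_toReal hvbne).symm
  have hnp1 : (n:ℝ)/p < 1 := (div_lt_one hp0).2 hp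
  have hnq : (n:ℝ)/q = n - n/p := by
    rw [div_eq_mul_one_div (n:ℝ) q, h1q, div_eq_mul_one_div (n:ℝ) p]; ring
  have hint : IntegrableOn (fun s : ℝ => s ^ (-((n:ℝ)/p))) (Ioo (0:ℝ) 1) :=
    (intervalIntegral.integrableOn_Ioo_rpow_iff one_pos).2 (by linarith)
  set κ := ∫ s in Ioo (0:ℝ) 1, s ^ (-((n:ℝ)/p)) with hκdef
  have hκnn : 0 ≤ κ :=
    setIntegral_nonneg measurableSet_Ioo fun s hs => Real.rpow_nonneg hs.1.le _
  have hK : ∫⁻ s in Ioo (0:ℝ) 1, ENNReal.ofReal (s ^ (-((n:ℝ)/p))) = ENNReal.ofReal κ :=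
    (ofReal_integral_eq_lintegral_ofReal hint
      ((ae_restrict_iff' measurableSet_Ioo).2
        (ae_of_all _ fun s hs => Real.rpow_nonneg hs.1.le _))).symm
  set C₀ : ℝ := 4 * κ * vb ^ (-(1/p)) with hC0def
  have hC0 : 0 ≤ C₀ := by positivity
  refine ⟨max 1 C₀, lt_of_lt_of_le one_pos (le_max_left _ _), ?_⟩
  set C : ℝ := max 1 C₀ with hCdef
  have hC1 : 1 ≤ C := le_max_left _ _
  intro u g hg hgp hug x y hxy1
  by_cases hd0 : dist x y = 0
  · have : x = y := by
      have := eq_of_dist_eq_zero hd0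
      exact this
    simp [this]
  have hd : 0 < dist x y := lt_of_le_of_ne dist_nonneg (Ne.symm hd0)
  set d := dist x y with hddef
  have hxyne : x ≠ y := dist_pos.1 hd
  set B := closedBall x d with hBdef
  set G := (∫⁻ z in closedBall x d, g z ^ p) ^ (1/p) with hGdef
  set J : EuclideanSpace ℝ (Fin n) → EuclideanSpace ℝ (Fin n) → ℝ≥0∞ :=
    fun w z => ∫⁻ s in Icc (0:ℝ) 1, g (w + s • (z - w)) with hJdef
  have hJm : ∀ w, Measurable (J w) := by
    intro w
    apply Measurable.lintegral_prod_right'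
      (f := fun zs : EuclideanSpace ℝ (Fin n) × ℝ => g (w + zs.2 • (zs.1 - w)))
    exact hg.comp
      (continuous_const.add (continuous_snd.smul (continuous_fst.sub continuous_const))).measurable
  -- Step A: pointwise bound on the ball
  have hkey : ∀ z ∈ B, ENNReal.ofReal |u x - u y|
      ≤ ENNReal.ofReal (2*d) * J y z + ENNReal.ofReal (2*d) * J x z := by
    intro z hz
    have hz2 : dist z x ≤ d := mem_closedBall.1 hz
    have h2d : d ≤ 2*d := by linarith
    by_cases hzy : z = y
    · have h1 : ENNReal.ofReal |u x - u y| ≤ ENNReal.ofReal (dist x y) * J x z := by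
        rw [abs_sub_comm, hzy]
        exact key_seg hg hug x y hxyne
      refine le_add_left ?_
      exact h1.trans (mul_le_mul' (ENNReal.ofReal_le_ofReal h2d) le_rfl)
    by_cases hzx : z = x
    · have h1 : ENNReal.ofReal |u x - u y| ≤ ENNReal.ofReal (dist y x) * J y z := by
        rw [hzx]
        exact key_seg hg hug y x (Ne.symm hxyne)
      refine le_add_right ?_
      refine h1.trans (mul_le_mul' (ENNReal.ofReal_le_ofReal ?_) le_rfl)
      rw [dist_comm]; exact h2d
    · have h1 := key_two hg hug y z x (fun h => hzy h.symm) hzx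
      have h2 : (∫⁻ s in Icc (0:ℝ) 1, g (z + s • (x - z))) = J x z := reflect_lint hg z x
      rw [h2] at h1
      refine h1.trans (add_le_add ?_ ?_)
      · refine mul_le_mul' (ENNReal.ofReal_le_ofReal ?_) le_rfl
        have hyx : dist y x = d := by rw [dist_comm]
        have hxz : dist x z ≤ d := by rw [dist_comm]; exact hz2
        calc dist y z ≤ dist y x + dist x z := dist_triangle _ _ _
          _ ≤ 2*d := by rw [hyx]; linarith
      · refine mul_le_mul' (ENNReal.ofReal_le_ofReal ?_) le_rfl
        rw [dist_comm] at hz2 ⊢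
        linarith
  -- volume of B
  have hVB : volume B = ENNReal.ofReal (d^n) * ENNReal.ofReal vb := by
    rw [hBdef, Measure.addHaar_closedBall' volume x hd.le, finrank_euclideanSpace_fin, hvbeq]
  -- Step B: average the pointwise bound
  have hstepB : ENNReal.ofReal |u x - u y| * (ENNReal.ofReal (d^n) * ENNReal.ofReal vb)
      ≤ ENNReal.ofReal (2*d) * (∫⁻ z in B, J y z)
        + ENNReal.ofReal (2*d) * ∫⁻ z in B, J x z := by
    calc ENNReal.ofReal |u x - u y| * (ENNReal.ofReal (d^n) * ENNReal.ofReal vb)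
        = ∫⁻ _ in B, ENNReal.ofReal |u x - u y| := by rw [setLIntegral_const, hVB]
      _ ≤ ∫⁻ z in B, (ENNReal.ofReal (2*d) * J y z + ENNReal.ofReal (2*d) * J x z) :=
          setLIntegral_mono
            ((measurable_const.mul (hJm y)).add (measurable_const.mul (hJm x))) hkey
      _ = ENNReal.ofReal (2*d) * (∫⁻ z in B, J y z)
            + ENNReal.ofReal (2*d) * ∫⁻ z in B, J x z := by
          rw [lintegral_add_left ((hJm y).const_mul (ENNReal.ofReal (2*d))),
            lintegral_const_mul _ (hJm y), lintegral_const_mul _ (hJm x)]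
  -- Step C: estimate for each endpoint w
  have hstepC : ∀ w : EuclideanSpace ℝ (Fin n), dist w x ≤ d →
      (∫⁻ z in B, J w z) ≤ ENNReal.ofReal κ *
        (ENNReal.ofReal (vb ^ (1/q)) * (ENNReal.ofReal (d ^ ((n:ℝ)/q)) * G)) := by
    intro w hw
    have hmeasprod : Measurable fun zs : EuclideanSpace ℝ (Fin n) × ℝ =>
        g (w + zs.2 • (zs.1 - w)) :=
      hg.comp
        (continuous_const.add
          (continuous_snd.smul (continuous_fst.sub continuous_const))).measurable
    have hswap : (∫⁻ z in B, J w z)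
        = ∫⁻ s in Icc (0:ℝ) 1, ∫⁻ z in B, g (w + s • (z - w)) := by
      exact lintegral_lintegral_swap hmeasprod.aemeasurable
    rw [hswap, ← setLIntegral_congr (Ioo_ae_eq_Icc (μ := (volume : Measure ℝ)) (a := (0:ℝ)) (b := (1:ℝ)))]
    set A := ENNReal.ofReal (vb ^ (1/q)) * (ENNReal.ofReal (d ^ ((n:ℝ)/q)) * G) with hAdef
    have hbnd : ∀ s ∈ Ioo (0:ℝ) 1, (∫⁻ z in B, g (w + s • (z - w)))
        ≤ ENNReal.ofReal (s ^ (-((n:ℝ)/p))) * A := by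
      intro s hs
      have hs0 : (0:ℝ) ≤ s := hs.1.le
      have hr1 : (0:ℝ) ≤ s ^ (-(n:ℝ)) := Real.rpow_nonneg hs0 _
      have hr2 : (0:ℝ) ≤ s ^ ((n:ℝ)/q) := Real.rpow_nonneg hs0 _
      have hr3 : (0:ℝ) ≤ d ^ ((n:ℝ)/q) := Real.rpow_nonneg hd.le _
      have hr4 : (0:ℝ) ≤ vb ^ ((1:ℝ)/q) := Real.rpow_nonneg hvb.le _
      have hr5 : (0:ℝ) ≤ s ^ (-((n:ℝ)/p)) := Real.rpow_nonneg hs0 _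
      set Bs := closedBall (w + s • (x - w)) (s*d) with hBsdef
      have hφpre : (fun z => w + s • (z - w)) ⁻¹' Bs = B := by
        ext z
        simp only [hBsdef, mem_preimage, mem_closedBall, hBdef]
        have hde : dist (w + s • (z - w)) (w + s • (x - w)) = s * dist z x := by
          rw [dist_eq_norm]
          have he : w + s • (z - w) - (w + s • (x - w)) = s • (z - x) := by module
          rw [he, norm_smul, Real.norm_eq_abs, abs_of_pos hs.1, dist_eq_norm]
        rw [hde]
        exact mul_le_mul_iff_right₀ hs.1
      have hscale := scale_lint_E (volume : Measure (EuclideanSpace ℝ (Fin n))) hg hs.1 w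
        (measurableSet_closedBall (x := w + s • (x - w)) (ε := s*d))
      rw [hφpre, finrank_euclideanSpace_fin] at hscale
      rw [hscale]
      -- Hölder on Bs
      have hH : (∫⁻ v in Bs, g v) ≤ (∫⁻ v in Bs, g v ^ p) ^ (1/p) * (volume Bs) ^ (1/q) := by
        have h := ENNReal.lintegral_mul_le_Lp_mul_Lq (volume.restrict Bs) hq
          hg.aemeasurable (aemeasurable_const (b := (1:ℝ≥0∞)))
        simpa [ENNReal.one_rpow, lintegral_const,
          Measure.restrict_apply MeasurableSet.univ] using h
      have hBsub : Bs ⊆ closedBall x d := by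
        apply closedBall_subset_closedBall'
        have hcen : dist (w + s • (x - w)) x = (1-s) * dist w x := by
          rw [dist_eq_norm]
          have he : w + s • (x - w) - x = (1-s) • (w - x) := by module
          rw [he, norm_smul, Real.norm_eq_abs, abs_of_pos (by linarith [hs.2] : (0:ℝ) < 1 - s),
            dist_eq_norm]
        rw [hcen]
        nlinarith [hs.1, hs.2, hw, dist_nonneg (x := w) (y := x)]
      have hmono : (∫⁻ v in Bs, g v ^ p) ^ (1/p) ≤ G :=
        ENNReal.rpow_le_rpow (lintegral_mono_set hBsub) (by positivity)
      have hsd : 0 < s*d := mul_pos hs.1 hd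
      have hvol : (volume Bs) ^ (1/q)
          = ENNReal.ofReal ((s*d) ^ ((n:ℝ)/q)) * ENNReal.ofReal (vb ^ (1/q)) := by
        rw [hBsdef, Measure.addHaar_closedBall' volume _ hsd.le, finrank_euclideanSpace_fin,
          hvbeq, ENNReal.mul_rpow_of_nonneg _ _ (by positivity : (0:ℝ) ≤ 1/q),
          ENNReal.ofReal_rpow_of_pos (by positivity), ENNReal.ofReal_rpow_of_pos hvb,
          ← Real.rpow_natCast (s*d) n, ← Real.rpow_mul hsd.le, mul_one_div]
      calc ENNReal.ofReal ((s^n)⁻¹) * ∫⁻ v in Bs, g v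
          ≤ ENNReal.ofReal ((s^n)⁻¹) *
            (G * (ENNReal.ofReal ((s*d) ^ ((n:ℝ)/q)) * ENNReal.ofReal (vb ^ (1/q)))) := by
            refine mul_le_mul' le_rfl (hH.trans ?_)
            rw [hvol]
            exact mul_le_mul' hmono le_rfl
        _ = ENNReal.ofReal (s ^ (-(n:ℝ)) * (s ^ ((n:ℝ)/q) * d ^ ((n:ℝ)/q)) * vb ^ (1/q)) * G := by
            have hsn : ((s^n)⁻¹ : ℝ) = s ^ (-(n:ℝ)) := by
              rw [← Real.rpow_natCast s n, ← Real.rpow_neg hs.1.le]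
            have hmulr : ((s*d) : ℝ) ^ ((n:ℝ)/q) = s ^ ((n:ℝ)/q) * d ^ ((n:ℝ)/q) :=
              Real.mul_rpow hs.1.le hd.le
            rw [hsn, hmulr, ENNReal.ofReal_mul (mul_nonneg hr1 (mul_nonneg hr2 hr3)),
              ENNReal.ofReal_mul hr1, ENNReal.ofReal_mul hr2]
            ring
        _ = ENNReal.ofReal (s ^ (-((n:ℝ)/p))) * A := by
            have hss : s ^ (-(n:ℝ)) * s ^ ((n:ℝ)/q) = s ^ (-((n:ℝ)/p)) := by
              rw [← Real.rpow_add hs.1]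
              congr 1
              linarith [hnq]
            have hreal : s ^ (-(n:ℝ)) * (s ^ ((n:ℝ)/q) * d ^ ((n:ℝ)/q)) * vb ^ (1/q)
                = s ^ (-((n:ℝ)/p)) * (vb ^ (1/q) * d ^ ((n:ℝ)/q)) := by
              calc s ^ (-(n:ℝ)) * (s ^ ((n:ℝ)/q) * d ^ ((n:ℝ)/q)) * vb ^ (1/q)
                  = (s ^ (-(n:ℝ)) * s ^ ((n:ℝ)/q)) * (d ^ ((n:ℝ)/q) * vb ^ (1/q)) := by ring
                _ = s ^ (-((n:ℝ)/p)) * (vb ^ (1/q) * d ^ ((n:ℝ)/q)) := by rw [hss]; ring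
            rw [hreal, ENNReal.ofReal_mul hr5, ENNReal.ofReal_mul hr4, hAdef]
            ring
    calc (∫⁻ s in Ioo (0:ℝ) 1, ∫⁻ z in B, g (w + s • (z - w)))
        ≤ ∫⁻ s in Ioo (0:ℝ) 1, ENNReal.ofReal (s ^ (-((n:ℝ)/p))) * A :=
          setLIntegral_mono (by fun_prop) hbnd
      _ = (∫⁻ s in Ioo (0:ℝ) 1, ENNReal.ofReal (s ^ (-((n:ℝ)/p)))) * A :=
          lintegral_mul_const _ (by fun_prop)
      _ = ENNReal.ofReal κ * A := by rw [hK]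
  -- combine everything
  have hyx : dist y x ≤ d := by rw [dist_comm]
  have htot : ENNReal.ofReal |u x - u y| * (ENNReal.ofReal (d^n) * ENNReal.ofReal vb)
      ≤ ENNReal.ofReal (4*d*κ) *
        (ENNReal.ofReal (vb ^ (1/q)) * (ENNReal.ofReal (d ^ ((n:ℝ)/q)) * G)) := by
    refine hstepB.trans ?_
    have h1 := hstepC y hyx
    have h2 := hstepC x (by simp [hd.le])
    calc ENNReal.ofReal (2*d) * (∫⁻ z in B, J y z) + ENNReal.ofReal (2*d) * ∫⁻ z in B, J x z
        ≤ ENNReal.ofReal (2*d) * (ENNReal.ofReal κ *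
              (ENNReal.ofReal (vb ^ (1/q)) * (ENNReal.ofReal (d ^ ((n:ℝ)/q)) * G)))
          + ENNReal.ofReal (2*d) * (ENNReal.ofReal κ *
              (ENNReal.ofReal (vb ^ (1/q)) * (ENNReal.ofReal (d ^ ((n:ℝ)/q)) * G))) :=
          add_le_add (mul_le_mul' le_rfl h1) (mul_le_mul' le_rfl h2)
      _ = ENNReal.ofReal (4*d*κ) *
            (ENNReal.ofReal (vb ^ (1/q)) * (ENNReal.ofReal (d ^ ((n:ℝ)/q)) * G)) := by
          have h4 : ENNReal.ofReal (4*d*κ)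
              = ENNReal.ofReal (2*d) * ENNReal.ofReal κ
                + ENNReal.ofReal (2*d) * ENNReal.ofReal κ := by
            rw [← ENNReal.ofReal_mul (by positivity),
              ← ENNReal.ofReal_add (by positivity) (by positivity)]
            congr 1
            ring
          rw [h4]
          ring
  set Vr : ℝ := d^n * vb with hVrdef
  have hVr : 0 < Vr := by positivity
  have hVeq : ENNReal.ofReal (d^n) * ENNReal.ofReal vb = ENNReal.ofReal Vr := by
    rw [← ENNReal.ofReal_mul (by positivity)]
  rw [hVeq] at htot
  have hdiv := (ENNReal.le_div_iff_mul_le (Or.inl (ENNReal.ofReal_pos.2 hVr).ne')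
    (Or.inl ENNReal.ofReal_ne_top)).2 htot
  refine hdiv.trans ?_
  set r : ℝ := 4*d*κ * (vb^((1:ℝ)/q) * d^((n:ℝ)/q)) with hrdef
  have hNr : ENNReal.ofReal (4*d*κ) *
      (ENNReal.ofReal (vb ^ (1/q)) * (ENNReal.ofReal (d ^ ((n:ℝ)/q)) * G))
      = ENNReal.ofReal r * G := by
    rw [hrdef,
      ENNReal.ofReal_mul (show (0:ℝ) ≤ 4*d*κ from mul_nonneg (by positivity) hκnn),
      ENNReal.ofReal_mul (show (0:ℝ) ≤ vb^((1:ℝ)/q) from Real.rpow_nonneg hvb.le _)]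
    ring
  rw [hNr]
  have hdivmul : ENNReal.ofReal r * G / ENNReal.ofReal Vr = ENNReal.ofReal (r / Vr) * G := by
    rw [div_eq_mul_inv, mul_right_comm, ← div_eq_mul_inv, ENNReal.ofReal_div_of_pos hVr]
  rw [hdivmul]
  have hrv : r / Vr = C₀ * d ^ ((1:ℝ) - (n:ℝ)/p) := by
    have e2 : d * d^((n:ℝ)/q) / (d^n) = d ^ ((1:ℝ) - (n:ℝ)/p) := by
      rw [show (1:ℝ) - (n:ℝ)/p = 1 + (n:ℝ)/q - n by linarith [hnq],
        Real.rpow_sub hd, Real.rpow_add hd, Real.rpow_one, Real.rpow_natCast]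
    have e1 : vb ^ ((1:ℝ)/q) / vb = vb ^ (-(1/p)) := by
      rw [show -(1/p) = 1/q - 1 by linarith [h1q], Real.rpow_sub hvb, Real.rpow_one]
    calc r / Vr = (4*κ) * (vb^((1:ℝ)/q)/vb) * (d * d^((n:ℝ)/q) / d^n) := by
          rw [hrdef, hVrdef]
          field_simp
      _ = C₀ * d ^ ((1:ℝ) - (n:ℝ)/p) := by rw [e1, e2, hC0def]
  have hcoef : ENNReal.ofReal (r / Vr) ≤ ENNReal.ofReal (C * d ^ ((1:ℝ) - (n:ℝ)/p)) := by
    rw [hrv]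
    exact ENNReal.ofReal_le_ofReal
      (mul_le_mul_of_nonneg_right (le_max_right 1 C₀) (Real.rpow_nonneg hd.le _))
  have hball : G ≤ (∫⁻ z in closedBall x (C*d), g z ^ p) ^ (1/p) := by
    refine ENNReal.rpow_le_rpow ?_ (by positivity)
    exact lintegral_mono_set (closedBall_subset_closedBall (le_mul_of_one_le_left hd.le hC1))
  exact mul_le_mul' hcoef hball
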